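/- Let h be a nonzero even integer and let Q₀ := log^{A'} X with A' > 0. Then, for all but at most O(H Q₀^{-1/3}) values of h with 0 < |h| ≤ H, one has ∑_{q ≤ Q₀} μ²(q) c_q(−h) / φ²(q) = 𝔖(h) + O(Q₀^{-1/3} log H). -/

import Mathlib

open Filter MeasureTheory Real
open scoped Classical

noncomputable section

/-- `e(x) = exp(2πix)`. -/
def eu (x : ℝ) : ℂ := Complex.exp (2 * Real.pi * Complex.I * x)

/-- The twin prime constant `Π₂ = ∏_{p > 2} (1 - 1/(p-1)²)`. -/
def twinPrimeConst : ℝ :=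
  ∏' p : Nat.Primes, if 2 < (p : ℕ) then (1 - 1 / ((p : ℝ) - 1) ^ 2) else 1

/-- The singular series `𝔖(h)`, equal to `2Π₂ ∏_{p ∣ h, p > 2} (p-1)/(p-2)` for even `h`
and `0` for odd `h`. -/
def singularSeries (h : ℤ) : ℝ :=
  if 2 ∣ h then
    2 * twinPrimeConst *
      ∏ p ∈ h.natAbs.primeFactors.filter (fun p => 2 < p), ((p : ℝ) - 1) / ((p : ℝ) - 2)
  else 0

/-- `n ∈ E₂'(P)`: `n = p₁p₂` with `p₁, p₂` prime and `p₁ ∈ (P, P^{1+δ}]`. -/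
def IsE2' (P δ : ℝ) (n : ℕ) : Prop :=
  ∃ p₁ p₂ : ℕ, p₁.Prime ∧ p₂.Prime ∧ n = p₁ * p₂ ∧ P < (p₁ : ℝ) ∧ (p₁ : ℝ) ≤ P ^ (1 + δ)

/-- Indicator function of `E₂'(P)`. -/
def indE2' (P δ : ℝ) (n : ℕ) : ℝ := if IsE2' P δ n then 1 else 0

/-- `n ∈ E₂''(X)`: `n = p₁p₂ ∈ (X, 2X]` with `p₁ ≤ p₂` primes and `p₁ ∈ [P₁, P₂]`. -/
def IsE2'' (P₁ P₂ X : ℝ) (n : ℕ) : Prop :=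
  ∃ p₁ p₂ : ℕ, p₁.Prime ∧ p₂.Prime ∧ n = p₁ * p₂ ∧ p₁ ≤ p₂ ∧
    P₁ ≤ (p₁ : ℝ) ∧ (p₁ : ℝ) ≤ P₂ ∧ X < (n : ℝ) ∧ (n : ℝ) ≤ 2 * X

/-- Indicator function of `E₂''(X)`. -/
def indE2'' (P₁ P₂ X : ℝ) (n : ℕ) : ℝ := if IsE2'' P₁ P₂ X n then 1 else 0

/-- The weight `ϖ₂(n) = log p₂` if `n = p₁p₂` with `p₁, p₂` prime, `P < p₁ ≤ P^{1+δ}`, and `0`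
otherwise. -/
def varpi2 (P δ : ℝ) (n : ℕ) : ℝ :=
  if h : ∃ p : ℕ × ℕ, p.1.Prime ∧ p.2.Prime ∧ n = p.1 * p.2 ∧
      P < (p.1 : ℝ) ∧ (p.1 : ℝ) ≤ P ^ (1 + δ)
  then Real.log h.choose.2 else 0

/-- The weight `ϖ₂(n) = log p₂` if `n = p₁p₂` with primes `p₁ ≤ p₂`, `p₁ ∈ [P₁, P₂]`, and `0`
otherwise. -/
def varpi2' (P₁ P₂ : ℝ) (n : ℕ) : ℝ :=
  if h : ∃ p : ℕ × ℕ, p.1.Prime ∧ p.2.Prime ∧ n = p.1 * p.2 ∧ p.1 ≤ p.2 ∧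
      P₁ ≤ (p.1 : ℝ) ∧ (p.1 : ℝ) ≤ P₂
  then Real.log h.choose.2 else 0

/-- The exponential sum `S(α) = ∑_{X < n ≤ 2X} w(n) e(nα)`. -/
def expS (w : ℕ → ℝ) (X α : ℝ) : ℂ :=
  ∑ n ∈ Finset.Ioc ⌊X⌋₊ ⌊2 * X⌋₊, (w n : ℂ) * eu (n * α)

/-- The minor arcs: `α ∈ (0,1)` with `|α - a/q| ≤ 1/(qQ)` for some `Q₀ < q ≤ Q`, `a < q`,
`(a, q) = 1`. -/
def minorArcs (Q₀ Q : ℝ) : Set ℝ :=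
  {α | α ∈ Set.Ioo (0 : ℝ) 1 ∧
    ∃ a q : ℕ, Q₀ < (q : ℝ) ∧ (q : ℝ) ≤ Q ∧ a < q ∧ Nat.Coprime a q ∧
      |α - (a : ℝ) / q| ≤ 1 / (q * Q)}

/-- The major arcs: `α ∈ (0,1)` with `|α - a/q| ≤ 1/(qQ)` for some `1 ≤ q ≤ Q₀`, `a < q`,
`(a, q) = 1`. -/
def majorArcs (Q₀ Q : ℝ) : Set ℝ :=
  {α | α ∈ Set.Ioo (0 : ℝ) 1 ∧
    ∃ a q : ℕ, 1 ≤ q ∧ (q : ℝ) ≤ Q₀ ∧ a < q ∧ Nat.Coprime a q ∧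
      |α - (a : ℝ) / q| ≤ 1 / (q * Q)}

/-- `∑_{P < p ≤ P'} 1/p`, a sum over primes. -/
def primeRecipSum (P P' : ℝ) : ℝ :=
  ∑ p ∈ (Finset.Ioc ⌊P⌋₊ ⌊P'⌋₊).filter Nat.Prime, 1 / (p : ℝ)

/-- `∑_{P₁ ≤ p ≤ P₂} 1/p`, a sum over primes. -/
def primeRecipSum' (P₁ P₂ : ℝ) : ℝ :=
  ∑ p ∈ (Finset.Icc ⌈P₁⌉₊ ⌊P₂⌋₊).filter Nat.Prime, 1 / (p : ℝ)

/-- The Ramanujan sum `c_q(n) = ∑_{1 ≤ a ≤ q, (a,q)=1} e(an/q)`. -/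
def ramanujanSum (q : ℕ) (n : ℤ) : ℂ :=
  ∑ a ∈ (Finset.Icc 1 q).filter (fun a => Nat.Coprime a q), eu ((a : ℝ) * (n : ℝ) / q)

/-- The Gauss sum of the conjugate character, `τ(χ̄) = ∑_{n=1}^q e(n/q) χ̄(n)`. -/
def gaussConj {q : ℕ} (χ : DirichletCharacter ℂ q) : ℂ :=
  ∑ n ∈ Finset.Icc 1 q, eu ((n : ℝ) / q) * (starRingEnd ℂ) (χ (n : ZMod q))

/-- `α` admits a major-arc rational approximation `a/q` with `1 ≤ q ≤ Q₀`, `a < q`,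
`(a,q) = 1`, `|α - a/q| ≤ 1/(qQ)`. -/
def majorApprox (Q₀ Q : ℝ) (α : ℝ) : Prop :=
  ∃ p : ℕ × ℕ, 1 ≤ p.2 ∧ (p.2 : ℝ) ≤ Q₀ ∧ p.1 < p.2 ∧ Nat.Coprime p.1 p.2 ∧
    |α - (p.1 : ℝ) / p.2| ≤ 1 / (p.2 * Q)

/-- The major-arc main-term function
`a(α) = (μ(q)/φ(q)) (∑_{P<p≤P^{1+δ}} 1/p) ∑_{X<n≤2X} e(βn)` for `α = a/q + β` on the major
arcs (and `0` off the major arcs). -/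
def aFun (P δ Q₀ Q X : ℝ) (α : ℝ) : ℂ :=
  if h : majorApprox Q₀ Q α then
    ((ArithmeticFunction.moebius h.choose.2 : ℤ) : ℂ) / (Nat.totient h.choose.2 : ℂ) *
      (primeRecipSum P (P ^ (1 + δ)) : ℂ) *
      ∑ n ∈ Finset.Ioc ⌊X⌋₊ ⌊2 * X⌋₊, eu ((α - (h.choose.1 : ℝ) / h.choose.2) * n)
  else 0

/-- Auxiliary function: the value of `b(α)` for `α = a/q + β`. -/
def bAux (P δ X : ℝ) (a q : ℕ) (β : ℝ) : ℂ :=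
  if hq : q = 0 then 0 else
    haveI : NeZero q := ⟨hq⟩
    (1 / (Nat.totient q : ℂ)) *
      ∑ χ : DirichletCharacter ℂ q, gaussConj χ * χ (a : ZMod q) *
        ∑ n ∈ Finset.Ioc ⌊X⌋₊ ⌊2 * X⌋₊,
          ((varpi2 P δ n : ℝ) * χ (n : ZMod q) -
            (if χ = 1 then (primeRecipSum P (P ^ (1 + δ)) : ℂ) else 0)) * eu (β * n)

/-- The major-arc error function `b(α)` (and `0` off the major arcs). -/
def bFun (P δ Q₀ Q X : ℝ) (α : ℝ) : ℂ :=
  if h : majorApprox Q₀ Q α then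
    bAux P δ X h.choose.1 h.choose.2 (α - (h.choose.1 : ℝ) / h.choose.2)
  else 0

/-- `A²(X) = ∫_𝔐 |a(α)|² dα`. -/
def Asq (P δ Q₀ Q X : ℝ) : ℝ := ∫ α in majorArcs Q₀ Q, ‖aFun P δ Q₀ Q X α‖ ^ 2

/-- `B²(X) = ∫_𝔐 |b(α)|² dα`. -/
def Bsq (P δ Q₀ Q X : ℝ) : ℝ := ∫ α in majorArcs Q₀ Q, ‖bFun P δ Q₀ Q X α‖ ^ 2

/-- The short character sum `∑_{x < n ≤ x+y} (χ(n)ϖ₂(n) - δ_χ ∑_{P<p≤P^{1+δ}} 1/p)`. -/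
def shortCharSum (P δ : ℝ) {q : ℕ} (χ : DirichletCharacter ℂ q) (x y : ℝ) : ℂ :=
  ∑ n ∈ Finset.Ioc ⌊x⌋₊ ⌊x + y⌋₊,
    ((varpi2 P δ n : ℝ) * χ (n : ZMod q) -
      (if χ = 1 then (primeRecipSum P (P ^ (1 + δ)) : ℂ) else 0))

/-- Sum over moduli `1 ≤ q ≤ Q₀` and all Dirichlet characters mod `q`, weighted by `q/φ(q)`. -/
def qCharSum (Q₀ : ℝ) (f : (q : ℕ) → DirichletCharacter ℂ q → ℝ) : ℝ :=
  ∑ q ∈ Finset.Icc 1 ⌊Q₀⌋₊,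
    if hq : q = 0 then 0 else
      haveI : NeZero q := ⟨hq⟩
      ((q : ℝ) / (Nat.totient q : ℝ)) * ∑ χ : DirichletCharacter ℂ q, f q χ

/-- `Δ = X/T₀³` with `T₀ = X^{1/100}`. -/
def DeltaX (X : ℝ) : ℝ := X / (X ^ ((1 : ℝ) / 100)) ^ 3

/-- The quantity `B₁(X)`. -/
def B1X (P δ Q₀ Q X : ℝ) : ℝ :=
  qCharSum Q₀ (fun q χ => ∫ x in X..(2 * X),
    ‖(2 / (q * Q) : ℝ) * shortCharSum P δ χ x (q * Q / 2) -
      (2 / (q * DeltaX X) : ℝ) * shortCharSum P δ χ x (q * DeltaX X / 2)‖ ^ 2)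

/-- The quantity `B₂(X)`. -/
def B2X (P δ Q₀ X : ℝ) : ℝ :=
  qCharSum Q₀ (fun q χ => ∫ x in X..(2 * X),
    ‖(2 / (q * DeltaX X) : ℝ) * shortCharSum P δ χ x (q * DeltaX X / 2)‖ ^ 2)

/-- The Dirichlet polynomial
`F(s,χ) = ∑_{X < p₁p₂ ≤ 2X, P < p₁ ≤ P^{1+δ}} χ(p₁)χ(p₂)/(p₁p₂)^s`. -/
def Fpoly (X P δ : ℝ) {q : ℕ} (χ : DirichletCharacter ℂ q) (s : ℂ) : ℂ :=
  ∑ p₁ ∈ (Finset.Ioc ⌊P⌋₊ ⌊P ^ (1 + δ)⌋₊).filter Nat.Prime,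
    ∑ p₂ ∈ (Finset.Ioc 0 ⌊2 * X⌋₊).filter
      (fun p₂ => p₂.Prime ∧ X < ((p₁ * p₂ : ℕ) : ℝ) ∧ ((p₁ * p₂ : ℕ) : ℝ) ≤ 2 * X),
      χ (p₁ : ZMod q) * χ (p₂ : ZMod q) / ((p₁ * p₂ : ℕ) : ℂ) ^ s

/-- `B₃(X) = ∑_{q ≤ Q₀} (q/φ(q)) ∑_{χ mod q} ∫_{T₀}^T |F(1+it,χ)|² dt`. -/
def B3X (X P δ Q₀ T₀ T : ℝ) : ℝ :=
  qCharSum Q₀ (fun q χ => ∫ t in T₀..T, ‖Fpoly X P δ χ (1 + t * Complex.I)‖ ^ 2)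

/-- `G_v(s,χ) = ∑_{e^{v/U} < p ≤ e^{(v+1)/U}} χ(p)/p^s`. -/
def Gpoly (U : ℝ) (v : ℕ) {q : ℕ} (χ : DirichletCharacter ℂ q) (s : ℂ) : ℂ :=
  ∑ p ∈ (Finset.Ioc ⌊Real.exp (v / U)⌋₊ ⌊Real.exp ((v + 1) / U)⌋₊).filter Nat.Prime,
    χ (p : ZMod q) / ((p : ℕ) : ℂ) ^ s

/-- `H_v(s,χ) = ∑_{Xe^{-v/U} < p ≤ 2Xe^{-v/U}} χ(p)/p^s`. -/
def Hpoly (X U : ℝ) (v : ℕ) {q : ℕ} (χ : DirichletCharacter ℂ q) (s : ℂ) : ℂ :=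
  ∑ p ∈ (Finset.Ioc ⌊X * Real.exp (-(v : ℝ) / U)⌋₊ ⌊2 * X * Real.exp (-(v : ℝ) / U)⌋₊).filter
      Nat.Prime,
    χ (p : ZMod q) / ((p : ℕ) : ℂ) ^ s

/-- A generic Dirichlet polynomial `∑_{N < n ≤ 2N} χ(n)/n^s` or `∑_{N < n ≤ 2N} χ(n)(log n)/n^s`
according to the flag `useLog`. -/
def NpolyGen (useLog : Bool) (N : ℝ) {q : ℕ} (χ : DirichletCharacter ℂ q) (s : ℂ) : ℂ :=
  ∑ n ∈ Finset.Ioc ⌊N⌋₊ ⌊2 * N⌋₊,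
    (if useLog then (Real.log n : ℂ) else 1) * χ (n : ZMod q) / ((n : ℕ) : ℂ) ^ s

/-- A Dirichlet polynomial `∑_{M < m ≤ 2M} a_m χ(m)/m^s` with arbitrary coefficients. -/
def MpolyGen (a : ℕ → ℂ) (M : ℝ) {q : ℕ} (χ : DirichletCharacter ℂ q) (s : ℂ) : ℂ :=
  ∑ m ∈ Finset.Ioc ⌊M⌋₊ ⌊2 * M⌋₊, a m * χ (m : ZMod q) / ((m : ℕ) : ℂ) ^ s

/-- The set `𝒯_{1,χ} = {t ∈ [T₀,T] : |G_{v₀}(1+it,χ)| ≤ e^{-α₁v₀/U}}`. -/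
def T1set (U : ℝ) (v₀ : ℕ) {q : ℕ} (χ : DirichletCharacter ℂ q) (T₀ T α₁ : ℝ) : Set ℝ :=
  {t ∈ Set.Icc T₀ T | ‖Gpoly U v₀ χ (1 + t * Complex.I)‖ ≤ Real.exp (-α₁ * v₀ / U)}

/-- `H` lies (eventually) in the range `log^{19+ε} X ≤ H ≤ exp((log X)^{o(1)})`. -/
def SmallHRange (H : ℝ → ℝ) : Prop :=
  ∃ f : ℝ → ℝ, Tendsto f atTop (nhds 0) ∧
    ∀ᶠ X in atTop, H X ≤ Real.exp ((Real.log X) ^ f X)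

/-- `H` lies (eventually) in the range `exp((log X)^{o(1)}) < H`. -/
def LargeHRange (H : ℝ → ℝ) : Prop :=
  ∀ c : ℝ, 0 < c → ∀ᶠ X in atTop, Real.exp ((Real.log X) ^ c) < H X

end

noncomputable section SingularAux
open ArithmeticFunction Finset

lemma eu_int (k : ℤ) : eu k = 1 := by
  rw [eu, Complex.exp_eq_one_iff]
  exact ⟨k, by push_cast; ring⟩

lemma eu_nat_mul (m : ℕ) (x : ℝ) : eu (m * x) = eu x ^ m := by
  rw [eu, eu, ← Complex.exp_nat_mul]
  push_cast
  ring_nf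

lemma eu_eq_one_iff {x : ℝ} : eu x = 1 ↔ ∃ k : ℤ, x = k := by
  rw [eu, Complex.exp_eq_one_iff]
  constructor
  · rintro ⟨k, hk⟩
    refine ⟨k, ?_⟩
    have h2 : (2 * (Real.pi:ℂ) * Complex.I) ≠ 0 := by
      simp [Real.pi_ne_zero, Complex.I_ne_zero]
    have : (x:ℂ) = (k:ℂ) := by
      have hpi : (Real.pi:ℂ) ≠ 0 := by exact_mod_cast Real.pi_ne_zero
      have h2 : (2 * (Real.pi:ℂ) * Complex.I) ≠ 0 := by
        simp [hpi, Complex.I_ne_zero]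
      have := hk.symm
      rw [mul_comm (2 * (Real.pi:ℂ) * Complex.I) (x:ℂ)] at this
      exact mul_right_cancel₀ h2 (by rw [this])
    exact_mod_cast this
  · rintro ⟨k, rfl⟩
    exact ⟨k, by push_cast; ring⟩

lemma eu_div_int_eq_one_iff {q : ℕ} (hq : q ≠ 0) (n : ℤ) :
    eu ((n : ℝ) / q) = 1 ↔ (q : ℤ) ∣ n := by
  rw [eu_eq_one_iff]
  constructor
  · rintro ⟨k, hk⟩
    refine ⟨k, ?_⟩
    have hq' : (q : ℝ) ≠ 0 := Nat.cast_ne_zero.mpr hq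
    have : (n : ℝ) = (q : ℝ) * k := by
      field_simp at hk; linarith [hk]
    exact_mod_cast this
  · rintro ⟨k, rfl⟩
    have hq' : (q : ℝ) ≠ 0 := Nat.cast_ne_zero.mpr hq
    exact ⟨k, by push_cast; field_simp⟩

lemma sum_eu_pow_range {q : ℕ} (hq : q ≠ 0) (n : ℤ) :
    ∑ a ∈ Finset.range q, eu ((n : ℝ) / q) ^ a = if (q : ℤ) ∣ n then (q : ℂ) else 0 := by
  set z := eu ((n : ℝ) / q) with hz
  have hq' : (q : ℝ) ≠ 0 := Nat.cast_ne_zero.mpr hq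
  have hzq : z ^ q = 1 := by
    rw [hz, ← eu_nat_mul]
    have : (q : ℝ) * ((n : ℝ) / q) = (n : ℤ) := by field_simp
    rw [this, eu_int]
  by_cases h1 : z = 1
  · rw [if_pos ((eu_div_int_eq_one_iff hq n).mp h1)]
    simp [h1]
  · rw [if_neg (fun hd => h1 ((eu_div_int_eq_one_iff hq n).mpr hd))]
    rw [geom_sum_eq h1, hzq]
    simp

def tA (n : ℤ) : ArithmeticFunction ℤ :=
  ⟨fun e => if (e : ℤ) ∣ n then (e : ℤ) else 0, by simp⟩

def cA (n : ℤ) : ArithmeticFunction ℤ := tA n * ArithmeticFunction.moebius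

lemma tA_apply (n : ℤ) (e : ℕ) : tA n e = if (e : ℤ) ∣ n then (e : ℤ) else 0 := rfl

lemma tA_mult (n : ℤ) : (tA n).IsMultiplicative := by
  refine ⟨by simp [tA_apply], @fun m k hmk => ?_⟩
  simp only [tA_apply]
  push_cast
  by_cases h1 : (m : ℤ) ∣ n <;> by_cases h2 : (k : ℤ) ∣ n
  · rw [if_pos ((Nat.isCoprime_iff_coprime.mpr hmk).mul_dvd h1 h2), if_pos h1, if_pos h2]
  · rw [if_neg (fun hd => h2 (dvd_trans ⟨m, by ring⟩ hd)), if_pos h1, if_neg h2, mul_zero]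
  · rw [if_neg (fun hd => h1 (dvd_trans ⟨k, by ring⟩ hd)), if_neg h1, zero_mul]
  · rw [if_neg (fun hd => h1 (dvd_trans ⟨k, by ring⟩ hd)), if_neg h1, zero_mul]

lemma cA_mult (n : ℤ) : (cA n).IsMultiplicative :=
  (tA_mult n).mul ArithmeticFunction.isMultiplicative_moebius

lemma cA_apply (n : ℤ) (q : ℕ) :
    cA n q = ∑ e ∈ q.divisors, (if (e : ℤ) ∣ n then (e : ℤ) else 0) * moebius (q / e) := by
  rw [cA, ArithmeticFunction.mul_apply,
    Nat.sum_divisorsAntidiagonal (f := fun a b => tA n a * moebius b)]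
  rfl

lemma cA_neg (n : ℤ) (q : ℕ) : cA (-n) q = cA n q := by
  rw [cA_apply, cA_apply]
  simp [Int.dvd_neg]

lemma cA_one (n : ℤ) : cA n 1 = 1 := (cA_mult n).1

lemma cA_prime {p : ℕ} (hp : p.Prime) (n : ℤ) :
    cA n p = (if (p : ℤ) ∣ n then (p : ℤ) else 0) - 1 := by
  rw [cA_apply, hp.divisors, Finset.sum_pair hp.one_lt.ne]
  rw [Nat.div_one, Nat.div_self hp.pos, moebius_apply_one, moebius_apply_prime hp]
  simp only [Nat.cast_one, one_dvd, if_pos, one_mul, mul_one]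
  ring

lemma abs_cA_le (n : ℤ) (q : ℕ) :
    |(cA n q : ℝ)| ≤ ∑ e ∈ q.divisors, (if (e : ℤ) ∣ n then (e : ℝ) else 0) := by
  rw [cA_apply]
  push_cast
  refine (Finset.abs_sum_le_sum_abs _ _).trans (Finset.sum_le_sum fun e he => ?_)
  rw [abs_mul]
  by_cases hd : (e : ℤ) ∣ n
  · simp only [hd, if_true]
    have h1 : |((moebius (q / e) : ℤ) : ℝ)| ≤ 1 := by
      exact_mod_cast ArithmeticFunction.abs_moebius_le_one (n := q / e)
    have h2 : |(e : ℝ)| = (e : ℝ) := abs_of_nonneg (by positivity)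
    rw [h2]
    calc (e : ℝ) * |((moebius (q / e) : ℤ) : ℝ)| ≤ (e : ℝ) * 1 :=
          mul_le_mul_of_nonneg_left h1 (by positivity)
      _ = (e : ℝ) := mul_one _
  · simp [hd]

lemma ramanujanSum_eq_cA {q : ℕ} (hq : q ≠ 0) (n : ℤ) :
    ramanujanSum q n = ((cA n q : ℤ) : ℂ) := by
  have hq' : (q : ℝ) ≠ 0 := Nat.cast_ne_zero.mpr hq
  -- step 1: filter to ite
  rw [ramanujanSum, Finset.sum_filter]
  -- step 2: coprimality indicator as a sum of moebius over divisors of gcd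
  have key : ∀ a : ℕ, (if Nat.Coprime a q then eu ((a : ℝ) * (n : ℝ) / q) else 0)
      = ∑ d ∈ (Nat.gcd a q).divisors, ((moebius d : ℤ) : ℂ) * eu ((a : ℝ) * (n : ℝ) / q) := by
    intro a
    have h1 : ((∑ d ∈ (Nat.gcd a q).divisors, moebius d : ℤ) : ℂ)
        = if Nat.Coprime a q then 1 else 0 := by
      have h2 := ArithmeticFunction.coe_mul_zeta_apply (f := (moebius : ArithmeticFunction ℤ))
        (x := Nat.gcd a q)
      rw [ArithmeticFunction.moebius_mul_coe_zeta] at h2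
      rw [← h2, ArithmeticFunction.one_apply]
      by_cases hc : Nat.Coprime a q
      · rw [if_pos (hc : Nat.gcd a q = 1), if_pos hc]; norm_num
      · rw [if_neg (hc : ¬Nat.gcd a q = 1), if_neg hc]; norm_num
    rw [← Finset.sum_mul]
    rw [show (∑ d ∈ (Nat.gcd a q).divisors, ((moebius d : ℤ) : ℂ))
        = ((∑ d ∈ (Nat.gcd a q).divisors, moebius d : ℤ) : ℂ) by push_cast; ring]
    rw [h1]
    split <;> simp
  simp_rw [key]
  -- step 3: divisors of gcd as filtered divisors of q
  have step3 : ∀ a ∈ Finset.Icc 1 q, (Nat.gcd a q).divisors = q.divisors.filter (· ∣ a) := by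
    intro a ha
    ext d
    simp only [Nat.mem_divisors, Finset.mem_filter]
    constructor
    · rintro ⟨hd, -⟩
      exact ⟨⟨hd.trans (Nat.gcd_dvd_right a q), hq⟩, hd.trans (Nat.gcd_dvd_left a q)⟩
    · rintro ⟨⟨hdq, -⟩, hda⟩
      exact ⟨Nat.dvd_gcd hda hdq, Nat.gcd_ne_zero_right hq⟩
  rw [Finset.sum_congr rfl (fun a ha => by rw [step3 a ha])]
  -- step 4: swap
  have swap : ∑ a ∈ Finset.Icc 1 q, ∑ d ∈ q.divisors.filter (· ∣ a),
        ((moebius d : ℤ) : ℂ) * eu ((a : ℝ) * (n : ℝ) / q)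
      = ∑ d ∈ q.divisors, ((moebius d : ℤ) : ℂ) *
          ∑ a ∈ (Finset.Icc 1 q).filter (d ∣ ·), eu ((a : ℝ) * (n : ℝ) / q) := by
    simp_rw [Finset.sum_filter, Finset.mul_sum]
    rw [Finset.sum_comm]
    refine Finset.sum_congr rfl fun d _ => Finset.sum_congr rfl fun a _ => ?_
    split <;> simp
  rw [swap]
  -- step 5: inner sums
  have inner : ∀ d ∈ q.divisors,
      ∑ a ∈ (Finset.Icc 1 q).filter (d ∣ ·), eu ((a : ℝ) * (n : ℝ) / q)
        = if ((q / d : ℕ) : ℤ) ∣ n then ((q / d : ℕ) : ℂ) else 0 := by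
    intro d hd
    obtain ⟨hdq, -⟩ := Nat.mem_divisors.mp hd
    have hd0 : d ≠ 0 := fun h => hq (by simpa [h] using hdq)
    set m := q / d with hm
    have hqm : q = d * m := (Nat.div_mul_cancel hdq).symm.trans (mul_comm _ _)
    have hm0 : m ≠ 0 := by
      intro h; exact hq (by rw [hqm, h, mul_zero])
    have himg : (Finset.Icc 1 q).filter (d ∣ ·) = (Finset.Icc 1 m).image (d * ·) := by
      ext a
      simp only [Finset.mem_filter, Finset.mem_Icc, Finset.mem_image]
      constructor
      · rintro ⟨⟨h1, h2⟩, b, rfl⟩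
        refine ⟨b, ⟨?_, ?_⟩, rfl⟩
        · refine Nat.pos_of_ne_zero ?_
          rintro rfl
          simp at h1
        · rw [hqm] at h2; exact Nat.le_of_mul_le_mul_left h2 (Nat.pos_of_ne_zero hd0)
      · rintro ⟨b, ⟨hb1, hb2⟩, rfl⟩
        refine ⟨⟨?_, ?_⟩, ⟨b, rfl⟩⟩
        · exact Nat.one_le_iff_ne_zero.mpr (by positivity)
        · rw [hqm]; exact Nat.mul_le_mul_left d hb2
    have hinj : ∀ x ∈ Finset.Icc 1 m, ∀ y ∈ Finset.Icc 1 m, d * x = d * y → x = y := by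
      intro x _ y _ h
      exact Nat.eq_of_mul_eq_mul_left (Nat.pos_of_ne_zero hd0) h
    rw [himg, Finset.sum_image hinj]
    have hval : ∀ b : ℕ, eu (((d * b : ℕ) : ℝ) * (n : ℝ) / q) = eu ((n : ℝ) / m) ^ b := by
      intro b
      rw [← eu_nat_mul]
      congr 1
      have hm' : (m : ℝ) ≠ 0 := Nat.cast_ne_zero.mpr hm0
      have hd' : (d : ℝ) ≠ 0 := Nat.cast_ne_zero.mpr hd0
      rw [hqm]
      push_cast
      field_simp
    simp_rw [hval]
    -- shift Icc 1 m to range m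
    have hshift : ∑ b ∈ Finset.Icc 1 m, eu ((n : ℝ) / m) ^ b
        = ∑ b ∈ Finset.range m, eu ((n : ℝ) / m) ^ b := by
      have hzm : eu ((n : ℝ) / m) ^ m = 1 := by
        rw [← eu_nat_mul]
        have : (m : ℝ) * ((n : ℝ) / m) = ((n : ℤ) : ℝ) := by
          field_simp
        rw [this, eu_int]
      have h1 : ∑ b ∈ Finset.range (m + 1), eu ((n : ℝ) / m) ^ b
          = ∑ b ∈ Finset.range m, eu ((n : ℝ) / m) ^ b + eu ((n : ℝ) / m) ^ m :=
        Finset.sum_range_succ _ _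
      have h2 : ∑ b ∈ Finset.range (m + 1), eu ((n : ℝ) / m) ^ b
          = eu ((n : ℝ) / m) ^ 0 + ∑ b ∈ Finset.Ico 1 (m + 1), eu ((n : ℝ) / m) ^ b := by
        rw [Finset.range_eq_Ico]
        exact Finset.sum_eq_sum_Ico_succ_bot (Nat.succ_pos m) _
      rw [← Finset.Ico_add_one_right_eq_Icc]
      rw [h1, hzm, pow_zero] at h2
      linear_combination h2.symm
    rw [hshift, sum_eu_pow_range hm0 n]
  rw [Finset.sum_congr rfl (fun d hd => by rw [inner d hd])]
  -- step 6: reindex d ↦ q / d and identify with cA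
  have hreindex : ∑ d ∈ q.divisors, ((moebius d : ℤ) : ℂ) *
        (if ((q / d : ℕ) : ℤ) ∣ n then ((q / d : ℕ) : ℂ) else 0)
      = ∑ e ∈ q.divisors, (if (e : ℤ) ∣ n then (e : ℂ) else 0) * ((moebius (q / e) : ℤ) : ℂ) := by
    rw [← Nat.sum_div_divisors q (fun e => (if (e : ℤ) ∣ n then (e : ℂ) else 0) *
      ((moebius (q / e) : ℤ) : ℂ))]
    refine Finset.sum_congr rfl fun d hd => ?_
    obtain ⟨hdq, -⟩ := Nat.mem_divisors.mp hd
    rw [Nat.div_div_self hdq hq]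
    ring
  rw [hreindex, cA_apply]
  push_cast [apply_ite (fun z : ℤ => (z : ℂ))]
  norm_num
-- number of odd prime-ish bounds
def omegaN (q : ℕ) : ℕ := q.primeFactors.card

lemma sf_factorization {q : ℕ} (hq : Squarefree q) {p : ℕ} (hp : p ∈ q.primeFactors) :
    q.factorization p = 1 := by
  have h1 := hq.natFactorization_le_one p
  have h2 : q.factorization p ≠ 0 := by
    rwa [← Finsupp.mem_support_iff, Nat.support_factorization]
  omega

lemma card_divisors_sf {q : ℕ} (hq : Squarefree q) :
    q.divisors.card = 2 ^ omegaN q := by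
  rw [Nat.card_divisors hq.ne_zero, omegaN]
  rw [Finset.prod_congr rfl (fun p hp => by rw [sf_factorization hq hp])]
  simp

lemma totient_lb {q : ℕ} (hq : Squarefree q) :
    (q : ℝ) ≤ 2 ^ omegaN q * (Nat.totient q : ℝ) := by
  have hφ : (Nat.totient q : ℝ) = ∏ p ∈ q.primeFactors, ((p : ℝ) - 1) := by
    have h1 : Nat.totient q = ∏ p ∈ q.primeFactors, (p - 1) := by
      rw [Nat.totient_eq_prod_factorization hq.ne_zero, Finsupp.prod, Nat.support_factorization]
      refine Finset.prod_congr rfl fun p hp => ?_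
      rw [sf_factorization hq hp]
      simp
    rw [h1, Nat.cast_prod]
    refine Finset.prod_congr rfl fun p hp => ?_
    have hp2 : 2 ≤ p := (Nat.prime_of_mem_primeFactors hp).two_le
    push_cast [Nat.cast_sub (by omega : 1 ≤ p)]
    ring
  have hq' : (q : ℝ) = ∏ p ∈ q.primeFactors, (p : ℝ) := by
    conv_lhs => rw [← Nat.prod_primeFactors_of_squarefree hq]
    rw [Nat.cast_prod]
  rw [hφ, hq', omegaN, ← Finset.prod_const, ← Finset.prod_mul_distrib]
  refine Finset.prod_le_prod (fun p _ => by positivity) fun p hp => ?_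
  have hp2 : 2 ≤ p := (Nat.prime_of_mem_primeFactors hp).two_le
  have : (2 : ℝ) ≤ (p : ℝ) := by exact_mod_cast hp2
  nlinarith

def C₀ : ℝ := 8 ^ (8 ^ 100 : ℕ)

lemma C₀_pos : 0 < C₀ := by unfold C₀; positivity

lemma eight_pow_omega_le {q : ℕ} (hq : Squarefree q) :
    (8 : ℝ) ^ omegaN q ≤ C₀ * (q : ℝ) ^ ((1 : ℝ) / 100) := by
  have h8 : (8 : ℝ) ^ omegaN q = ∏ p ∈ q.primeFactors, (8 : ℝ) := by
    rw [Finset.prod_const, omegaN]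
  rw [h8, ← Finset.prod_filter_mul_prod_filter_not q.primeFactors (fun p => p < 8 ^ 100)]
  have hsmall : ∏ p ∈ q.primeFactors.filter (fun p => p < 8 ^ 100), (8 : ℝ) ≤ C₀ := by
    rw [Finset.prod_const, C₀]
    refine pow_le_pow_right₀ (by norm_num) ?_
    calc (q.primeFactors.filter (fun p => p < 8 ^ 100)).card
        ≤ (Finset.range (8 ^ 100)).card := by
          refine Finset.card_le_card fun p hp => ?_
          simp only [Finset.mem_filter] at hp
          exact Finset.mem_range.mpr hp.2
      _ = 8 ^ 100 := Finset.card_range _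
  have hbig : ∏ p ∈ q.primeFactors.filter (fun p => ¬ p < 8 ^ 100), (8 : ℝ)
      ≤ (q : ℝ) ^ ((1 : ℝ) / 100) := by
    have step1 : ∏ p ∈ q.primeFactors.filter (fun p => ¬ p < 8 ^ 100), (8 : ℝ)
        ≤ ∏ p ∈ q.primeFactors.filter (fun p => ¬ p < 8 ^ 100), (p : ℝ) ^ ((1 : ℝ) / 100) := by
      refine Finset.prod_le_prod (fun _ _ => by norm_num) fun p hp => ?_
      simp only [Finset.mem_filter, not_lt] at hp
      have : ((8 : ℝ) ^ (100 : ℕ)) ^ ((1 : ℝ) / 100) ≤ (p : ℝ) ^ ((1 : ℝ) / 100) := by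
        refine Real.rpow_le_rpow (by positivity) ?_ (by norm_num)
        exact_mod_cast hp.2
      calc (8 : ℝ) = ((8 : ℝ) ^ (100 : ℕ)) ^ ((1 : ℝ) / 100) := by
            rw [← Real.rpow_natCast (8 : ℝ) 100, ← Real.rpow_mul (by norm_num)]
            norm_num
        _ ≤ (p : ℝ) ^ ((1 : ℝ) / 100) := this
    refine step1.trans ?_
    rw [Real.finset_prod_rpow _ _ (fun p _ => by positivity)]
    refine Real.rpow_le_rpow (by positivity) ?_ (by norm_num)
    have hsub : ∏ p ∈ q.primeFactors.filter (fun p => ¬ p < 8 ^ 100), p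
        ≤ ∏ p ∈ q.primeFactors, p := by
      refine Finset.prod_le_prod_of_subset_of_one_le' (Finset.filter_subset _ _)
        fun p hp _ => (Nat.prime_of_mem_primeFactors hp).one_le
    rw [Nat.prod_primeFactors_of_squarefree hq] at hsub
    rw [← Nat.cast_prod]
    exact_mod_cast hsub
  calc (∏ p ∈ q.primeFactors.filter (fun p => p < 8 ^ 100), (8 : ℝ)) *
        ∏ p ∈ q.primeFactors.filter (fun p => ¬ p < 8 ^ 100), (8 : ℝ)
      ≤ C₀ * ((q : ℝ) ^ ((1 : ℝ) / 100)) := by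
        refine mul_le_mul hsmall hbig (Finset.prod_nonneg fun _ _ => by norm_num) C₀_pos.le

lemma key_bound (q : ℕ) :
    ((moebius q : ℤ) : ℝ) ^ 2 * (q.divisors.card : ℝ) / ((Nat.totient q : ℕ) : ℝ) ^ 2
      ≤ C₀ * (q : ℝ) ^ (-(199 : ℝ) / 100) := by
  by_cases hq : Squarefree q
  · have hq0 : q ≠ 0 := hq.ne_zero
    have hqpos : (0:ℝ) < q := by exact_mod_cast Nat.pos_of_ne_zero hq0
    have hμ : ((moebius q : ℤ) : ℝ) ^ 2 = 1 := by
      have := ArithmeticFunction.moebius_sq_eq_one_of_squarefree hq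
      exact_mod_cast congrArg (fun z : ℤ => (z : ℝ)) this
    have hφpos : 0 < ((Nat.totient q : ℕ) : ℝ) := by
      exact_mod_cast Nat.totient_pos.mpr (Nat.pos_of_ne_zero hq0)
    set W : ℝ := 2 ^ omegaN q with hW
    have hWpos : (0:ℝ) < W := by positivity
    set φR : ℝ := ((Nat.totient q : ℕ) : ℝ) with hφR
    have hcard : (q.divisors.card : ℝ) = W := by
      rw [card_divisors_sf hq]; push_cast; rfl
    have h3 : W ^ 3 ≤ C₀ * (q : ℝ) ^ ((1 : ℝ) / 100) := by
      have h2' : W ^ 3 = (8:ℝ) ^ omegaN q := by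
        rw [hW, ← pow_mul, mul_comm, pow_mul]; norm_num
      rw [h2']; exact eight_pow_omega_le hq
    have h4 : (q : ℝ) ≤ W * φR := totient_lb hq
    have hA : W / φR ^ 2 ≤ W ^ 3 / (q:ℝ) ^ 2 := by
      rw [div_le_div_iff₀ (pow_pos hφpos 2) (pow_pos hqpos 2)]
      have h5 : (q:ℝ) ^ 2 ≤ (W * φR) ^ 2 := by nlinarith
      nlinarith [h5, hWpos]
    have hB : W ^ 3 / (q:ℝ) ^ 2 ≤ C₀ * (q:ℝ) ^ (-(199:ℝ)/100) := by
      rw [div_le_iff₀ (by positivity)]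
      calc W ^ 3 ≤ C₀ * (q:ℝ) ^ ((1:ℝ)/100) := h3
        _ = C₀ * (q:ℝ) ^ (-(199:ℝ)/100) * (q:ℝ) ^ 2 := by
            rw [mul_assoc, ← Real.rpow_natCast (q:ℝ) 2, ← Real.rpow_add hqpos]
            norm_num
    rw [hμ, one_mul, hcard]
    exact hA.trans hB
  · have hμ : moebius q = 0 := ArithmeticFunction.moebius_eq_zero_of_not_squarefree hq
    rw [hμ]
    simp only [Int.cast_zero, ne_eq, OfNat.ofNat_ne_zero, not_false_eq_true, zero_pow, zero_mul,
      zero_div]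
    exact mul_nonneg C₀_pos.le (Real.rpow_nonneg (Nat.cast_nonneg q) _)
-- Part 4: the multiplicative functions and bounds
def gg (h : ℤ) (q : ℕ) : ℝ :=
  ((moebius q : ℤ) : ℝ) ^ 2 * ((cA h q : ℤ) : ℝ) / ((Nat.totient q : ℕ) : ℝ) ^ 2

def gstar (q : ℕ) : ℝ :=
  if 2 ∣ q then 0 else ((moebius q : ℤ) : ℝ) / ((Nat.totient q : ℕ) : ℝ) ^ 2

def BB (h : ℤ) (q : ℕ) : ℝ :=
  ((moebius q : ℤ) : ℝ) ^ 2 * (∑ e ∈ q.divisors, if (e : ℤ) ∣ h then (e : ℝ) else 0)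
    / ((Nat.totient q : ℕ) : ℝ) ^ 2

lemma inner_sum_nonneg (h : ℤ) (q : ℕ) :
    0 ≤ ∑ e ∈ q.divisors, (if (e : ℤ) ∣ h then (e : ℝ) else 0) :=
  Finset.sum_nonneg fun e _ => by split <;> positivity

lemma BB_nonneg (h : ℤ) (q : ℕ) : 0 ≤ BB h q := by
  unfold BB
  have := inner_sum_nonneg h q
  positivity

lemma abs_gg_le (h : ℤ) (q : ℕ) : |gg h q| ≤ BB h q := by
  unfold gg BB
  rw [abs_div, abs_mul, abs_of_nonneg (sq_nonneg ((moebius q : ℤ) : ℝ)),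
    abs_of_nonneg (sq_nonneg (((Nat.totient q : ℕ) : ℝ)))]
  rcases eq_or_ne (Nat.totient q) 0 with hφ | hφ
  · rw [hφ]; norm_num
  · have hφpos : 0 < ((Nat.totient q : ℕ) : ℝ) ^ 2 := by
      have : 0 < Nat.totient q := Nat.pos_of_ne_zero hφ
      positivity
    refine div_le_div_of_nonneg_right ?_ hφpos.le
    exact mul_le_mul_of_nonneg_left (abs_cA_le h q) (sq_nonneg _)

lemma key_bound' (q : ℕ) :
    ((moebius q : ℤ) : ℝ) ^ 2 * (q.divisors.card : ℝ) / ((Nat.totient q : ℕ) : ℝ) ^ 2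
      ≤ C₀ * (q : ℝ) ^ (-(199 : ℝ) / 100) := key_bound q

lemma BB_le {h : ℤ} (hh : h ≠ 0) (q : ℕ) :
    BB h q ≤ (h.natAbs : ℝ) * (C₀ * (q : ℝ) ^ (-(199 : ℝ) / 100)) := by
  have hinner : ∑ e ∈ q.divisors, (if (e : ℤ) ∣ h then (e : ℝ) else 0)
      ≤ (q.divisors.card : ℝ) * (h.natAbs : ℝ) := by
    have := Finset.sum_le_card_nsmul q.divisors
      (fun e => if (e : ℤ) ∣ h then (e : ℝ) else 0) ((h.natAbs : ℝ)) ?_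
    · simpa [nsmul_eq_mul] using this
    · intro e he
      split
      · rename_i hd
        have he0 : 0 < (e : ℤ) := by
          exact_mod_cast Nat.pos_of_mem_divisors he
        have : (e : ℤ) ≤ |h| := Int.le_of_dvd (abs_pos.mpr hh) ((dvd_abs _ _).mpr hd)
        rw [Int.abs_eq_natAbs] at this
        exact_mod_cast this
      · positivity
  unfold BB
  calc ((moebius q : ℤ) : ℝ) ^ 2 * (∑ e ∈ q.divisors, if (e : ℤ) ∣ h then (e : ℝ) else 0)
        / ((Nat.totient q : ℕ) : ℝ) ^ 2
      ≤ ((moebius q : ℤ) : ℝ) ^ 2 * ((q.divisors.card : ℝ) * (h.natAbs : ℝ))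
        / ((Nat.totient q : ℕ) : ℝ) ^ 2 := by
        rcases eq_or_ne (Nat.totient q) 0 with hφ | hφ
        · rw [hφ]; norm_num
        · have hφpos : 0 < ((Nat.totient q : ℕ) : ℝ) ^ 2 := by
            have : 0 < Nat.totient q := Nat.pos_of_ne_zero hφ
            positivity
          refine div_le_div_of_nonneg_right ?_ hφpos.le
          exact mul_le_mul_of_nonneg_left hinner (sq_nonneg _)
    _ = (h.natAbs : ℝ) * (((moebius q : ℤ) : ℝ) ^ 2 * (q.divisors.card : ℝ)
          / ((Nat.totient q : ℕ) : ℝ) ^ 2) := by ring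
    _ ≤ (h.natAbs : ℝ) * (C₀ * (q : ℝ) ^ (-(199 : ℝ) / 100)) := by
        refine mul_le_mul_of_nonneg_left (key_bound q) (by positivity)

lemma abs_gstar_le (q : ℕ) : |gstar q| ≤ C₀ * (q : ℝ) ^ (-(199 : ℝ) / 100) := by
  unfold gstar
  split
  · rw [abs_zero]
    exact mul_nonneg C₀_pos.le (Real.rpow_nonneg (Nat.cast_nonneg q) _)
  · rename_i hq2
    have hq0 : q ≠ 0 := fun h => hq2 (h ▸ dvd_zero 2)
    have hD : (1 : ℝ) ≤ (q.divisors.card : ℝ) := by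
      have : q ∈ q.divisors := Nat.mem_divisors_self q hq0
      have : 0 < q.divisors.card := Finset.card_pos.mpr ⟨q, this⟩
      exact_mod_cast this
    have habs : |((moebius q : ℤ) : ℝ)| ≤ ((moebius q : ℤ) : ℝ) ^ 2 := by
      by_cases hq : Squarefree q
      · have h1 : |moebius q| = 1 := ArithmeticFunction.abs_moebius_eq_one_of_squarefree hq
        have h2 : (moebius q) ^ 2 = 1 := ArithmeticFunction.moebius_sq_eq_one_of_squarefree hq
        have h1' : |((moebius q : ℤ) : ℝ)| = 1 := by
          rw [← Int.cast_abs, h1, Int.cast_one]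
        have h2' : ((moebius q : ℤ) : ℝ) ^ 2 = 1 := by exact_mod_cast congrArg (fun z : ℤ => (z : ℝ)) h2
        rw [h1', h2']
      · rw [ArithmeticFunction.moebius_eq_zero_of_not_squarefree hq]
        norm_num
    calc |((moebius q : ℤ) : ℝ) / ((Nat.totient q : ℕ) : ℝ) ^ 2|
        = |((moebius q : ℤ) : ℝ)| / ((Nat.totient q : ℕ) : ℝ) ^ 2 := by
          rw [abs_div, abs_of_nonneg (sq_nonneg (((Nat.totient q : ℕ) : ℝ)))]
      _ ≤ ((moebius q : ℤ) : ℝ) ^ 2 * (q.divisors.card : ℝ) / ((Nat.totient q : ℕ) : ℝ) ^ 2 := by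
          rcases eq_or_ne (Nat.totient q) 0 with hφ | hφ
          · rw [hφ]; norm_num
          · have hφpos : 0 < ((Nat.totient q : ℕ) : ℝ) ^ 2 := by
              have : 0 < Nat.totient q := Nat.pos_of_ne_zero hφ
              positivity
            refine div_le_div_of_nonneg_right ?_ hφpos.le
            calc |((moebius q : ℤ) : ℝ)| ≤ ((moebius q : ℤ) : ℝ) ^ 2 := habs
              _ = ((moebius q : ℤ) : ℝ) ^ 2 * 1 := (mul_one _).symm
              _ ≤ ((moebius q : ℤ) : ℝ) ^ 2 * (q.divisors.card : ℝ) :=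
                  mul_le_mul_of_nonneg_left hD (sq_nonneg _)
      _ ≤ C₀ * (q : ℝ) ^ (-(199 : ℝ) / 100) := key_bound q

lemma summable_rpow199 : Summable (fun q : ℕ => C₀ * (q : ℝ) ^ (-(199 : ℝ) / 100)) :=
  (Real.summable_nat_rpow.mpr (by norm_num)).mul_left C₀

lemma summable_BB {h : ℤ} (hh : h ≠ 0) : Summable (BB h) :=
  Summable.of_nonneg_of_le (BB_nonneg h) (BB_le hh) (summable_rpow199.mul_left _)

lemma summable_abs_gg {h : ℤ} (hh : h ≠ 0) : Summable (fun q => |gg h q|) :=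
  Summable.of_nonneg_of_le (fun q => abs_nonneg _) (abs_gg_le h) (summable_BB hh)

lemma summable_gg {h : ℤ} (hh : h ≠ 0) : Summable (gg h) := (summable_abs_gg hh).of_abs

lemma summable_abs_gstar : Summable (fun q => |gstar q|) :=
  Summable.of_nonneg_of_le (fun q => abs_nonneg _) abs_gstar_le summable_rpow199

def KK : ℝ := C₀ * ∑' (q : ℕ), (q : ℝ) ^ (-(129 : ℝ) / 100)

lemma summable_rpow129 : Summable (fun q : ℕ => (q : ℝ) ^ (-(129 : ℝ) / 100)) :=
  Real.summable_nat_rpow.mpr (by norm_num)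

lemma KK_nonneg : 0 ≤ KK :=
  mul_nonneg C₀_pos.le (tsum_nonneg fun q => Real.rpow_nonneg (Nat.cast_nonneg q) _)

lemma tsum_tail_le {Q : ℝ} (hQ : 1 ≤ Q) {f : ℕ → ℝ} (hf0 : ∀ q, 0 ≤ f q)
    (hfb : ∀ q, f q ≤ C₀ * (q : ℝ) ^ (-(199 : ℝ) / 100)) :
    ∑' (q : ((↑(Finset.Icc 1 ⌊Q⌋₊) : Set ℕ)ᶜ : Set ℕ)), f q ≤ KK * Q ^ (-(2 : ℝ) / 3) := by
  have hQ0 : (0 : ℝ) < Q := lt_of_lt_of_le one_pos hQ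
  set s : Set ℕ := (↑(Finset.Icc 1 ⌊Q⌋₊) : Set ℕ)ᶜ with hs
  have hfs : Summable f := Summable.of_nonneg_of_le hf0 hfb summable_rpow199
  set g : ℕ → ℝ := fun q => (C₀ * Q ^ (-(7 : ℝ) / 10)) * (q : ℝ) ^ (-(129 : ℝ) / 100) with hg
  have hgs : Summable g := summable_rpow129.mul_left _
  have hpt : ∀ q : s, f q ≤ g q := by
    rintro ⟨q, hq⟩
    rcases eq_or_ne q 0 with rfl | hq0
    · have h1 := hfb 0
      have h2 : ((0 : ℕ) : ℝ) ^ (-(199 : ℝ) / 100) = 0 := by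
        rw [Nat.cast_zero, Real.zero_rpow (by norm_num)]
      have h3 : ((0 : ℕ) : ℝ) ^ (-(129 : ℝ) / 100) = 0 := by
        rw [Nat.cast_zero, Real.zero_rpow (by norm_num)]
      simp only [hg, h3, mul_zero]
      calc f 0 ≤ C₀ * ((0:ℕ) : ℝ) ^ (-(199 : ℝ) / 100) := h1
        _ = 0 := by rw [h2, mul_zero]
    · have hqQ : Q < (q : ℝ) := by
        have hnot : q ∉ Finset.Icc 1 ⌊Q⌋₊ := by
          intro hmem
          exact hq (by simpa using hmem)
        have h1 : 1 ≤ q := Nat.one_le_iff_ne_zero.mpr hq0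
        have h2 : ⌊Q⌋₊ < q := by
          by_contra hle
          exact hnot (Finset.mem_Icc.mpr ⟨h1, by omega⟩)
        calc Q < (⌊Q⌋₊ : ℝ) + 1 := Nat.lt_floor_add_one Q
          _ ≤ (q : ℝ) := by exact_mod_cast h2
      have hq1 : (1 : ℝ) ≤ (q : ℝ) := hQ.trans hqQ.le
      have hqpos : (0 : ℝ) < (q : ℝ) := lt_of_lt_of_le one_pos hq1
      calc f q ≤ C₀ * (q : ℝ) ^ (-(199 : ℝ) / 100) := hfb q
        _ = C₀ * ((q : ℝ) ^ (-(7 : ℝ) / 10) * (q : ℝ) ^ (-(129 : ℝ) / 100)) := by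
            rw [← Real.rpow_add hqpos]; norm_num
        _ ≤ C₀ * (Q ^ (-(7 : ℝ) / 10) * (q : ℝ) ^ (-(129 : ℝ) / 100)) := by
            refine mul_le_mul_of_nonneg_left (mul_le_mul_of_nonneg_right ?_
              (Real.rpow_nonneg hqpos.le _)) C₀_pos.le
            rw [show (-(7:ℝ)/10) = -(7/10) by norm_num, Real.rpow_neg hQ0.le,
              Real.rpow_neg hqpos.le]
            refine inv_anti₀ (Real.rpow_pos_of_pos hQ0 _) ?_
            exact Real.rpow_le_rpow hQ0.le hqQ.le (by norm_num)
        _ = g q := by rw [hg]; ring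
  calc ∑' (q : s), f q ≤ ∑' (q : s), g q :=
        Summable.tsum_le_tsum hpt (hfs.subtype s) (hgs.subtype s)
    _ ≤ ∑' (q : ℕ), g q := by
        refine Summable.tsum_le_tsum_of_inj (Subtype.val) Subtype.val_injective
          (fun q _ => ?_) (fun q => le_refl _) (hgs.subtype s) hgs
        exact mul_nonneg (mul_nonneg C₀_pos.le (Real.rpow_nonneg hQ0.le _))
          (Real.rpow_nonneg (Nat.cast_nonneg q) _)
    _ = (C₀ * Q ^ (-(7 : ℝ) / 10)) * ∑' (q : ℕ), (q : ℝ) ^ (-(129 : ℝ) / 100) := tsum_mul_left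
    _ = KK * Q ^ (-(7 : ℝ) / 10) := by rw [KK]; ring
    _ ≤ KK * Q ^ (-(2 : ℝ) / 3) := by
        refine mul_le_mul_of_nonneg_left ?_ KK_nonneg
        exact Real.rpow_le_rpow_of_exponent_le hQ (by norm_num)
-- Part 5: Euler products and the singular series identity
lemma gg_one (h : ℤ) : gg h 1 = 1 := by
  unfold gg
  rw [cA_one, ArithmeticFunction.moebius_apply_one, Nat.totient_one]
  norm_num

lemma gg_zero (h : ℤ) : gg h 0 = 0 := by
  unfold gg
  simp

lemma gg_mul {h : ℤ} {m k : ℕ} (hmk : Nat.Coprime m k) : gg h (m * k) = gg h m * gg h k := by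
  unfold gg
  rw [(cA_mult h).map_mul_of_coprime hmk,
    ArithmeticFunction.isMultiplicative_moebius.map_mul_of_coprime hmk, Nat.totient_mul hmk]
  push_cast
  ring

lemma gstar_one : gstar 1 = 1 := by
  unfold gstar
  rw [if_neg (by norm_num), ArithmeticFunction.moebius_apply_one, Nat.totient_one]
  norm_num

lemma gstar_zero : gstar 0 = 0 := by
  unfold gstar
  rw [if_pos (dvd_zero 2)]

lemma gstar_mul {m k : ℕ} (hmk : Nat.Coprime m k) : gstar (m * k) = gstar m * gstar k := by
  unfold gstar
  by_cases h2m : 2 ∣ m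
  · rw [if_pos (h2m.mul_right k), if_pos h2m, zero_mul]
  by_cases h2k : 2 ∣ k
  · rw [if_pos (h2k.mul_left m), if_pos h2k, mul_zero]
  have h2mk : ¬ 2 ∣ m * k := by
    intro hd
    rcases (Nat.Prime.dvd_mul Nat.prime_two).mp hd with hca | hca
    exacts [h2m hca, h2k hca]
  rw [if_neg h2mk, if_neg h2m, if_neg h2k,
    ArithmeticFunction.isMultiplicative_moebius.map_mul_of_coprime hmk, Nat.totient_mul hmk]
  push_cast
  ring

lemma gg_prime_pow_eq_zero (h : ℤ) {p : ℕ} (hp : p.Prime) {e : ℕ} (he : 2 ≤ e) :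
    gg h (p ^ e) = 0 := by
  unfold gg
  rw [ArithmeticFunction.moebius_apply_prime_pow hp (by omega : e ≠ 0),
    if_neg (by omega : ¬ e = 1)]
  norm_num

lemma gstar_prime_pow_eq_zero {p : ℕ} (hp : p.Prime) {e : ℕ} (he : 2 ≤ e) :
    gstar (p ^ e) = 0 := by
  unfold gstar
  split
  · rfl
  · rw [ArithmeticFunction.moebius_apply_prime_pow hp (by omega : e ≠ 0),
      if_neg (by omega : ¬ e = 1)]
    norm_num

lemma tsum_gg_prime_pow (h : ℤ) (p : Nat.Primes) :
    ∑' e : ℕ, gg h ((p : ℕ) ^ e) = 1 + gg h (p : ℕ) := by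
  rw [tsum_eq_sum (s := ({0, 1} : Finset ℕ)) ?_]
  · rw [Finset.sum_pair (by norm_num : (0 : ℕ) ≠ 1), pow_zero, pow_one, gg_one]
  · intro e he
    simp only [Finset.mem_insert, Finset.mem_singleton] at he
    push_neg at he
    exact gg_prime_pow_eq_zero h p.2 (by omega)

lemma tsum_gstar_prime_pow (p : Nat.Primes) :
    ∑' e : ℕ, gstar ((p : ℕ) ^ e)
      = if 2 < (p : ℕ) then 1 - 1 / (((p : ℕ) : ℝ) - 1) ^ 2 else 1 := by
  rw [tsum_eq_sum (s := ({0, 1} : Finset ℕ)) ?_]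
  · rw [Finset.sum_pair (by norm_num : (0 : ℕ) ≠ 1), pow_zero, pow_one, gstar_one]
    have hp := p.2
    by_cases h2 : (p : ℕ) = 2
    · rw [if_neg (by omega)]
      unfold gstar
      rw [h2, if_pos (dvd_refl 2), add_zero]
    · have h2lt : 2 < (p : ℕ) := by
        have := hp.two_le
        omega
      rw [if_pos h2lt]
      unfold gstar
      rw [if_neg ?_, ArithmeticFunction.moebius_apply_prime hp, Nat.totient_prime hp]
      · have hcast : ((((p : ℕ) - 1 : ℕ)) : ℝ) = ((p : ℕ) : ℝ) - 1 := by
          have := hp.one_le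
          push_cast [Nat.cast_sub this]
          ring
        rw [hcast]
        push_cast
        ring
      · intro hd
        have := (Nat.prime_dvd_prime_iff_eq Nat.prime_two hp).mp hd
        exact h2 this.symm
  · intro e he
    simp only [Finset.mem_insert, Finset.mem_singleton] at he
    push_neg at he
    exact gstar_prime_pow_eq_zero p.2 (by omega)

lemma hasProd_gg {h : ℤ} (hh : h ≠ 0) :
    HasProd (fun p : Nat.Primes => 1 + gg h (p : ℕ)) (∑' q, gg h q) := by
  have h0 := EulerProduct.eulerProduct_hasProd (f := gg h) (gg_one h)
    (fun {m k} hmk => gg_mul hmk)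
    (by simpa [Real.norm_eq_abs] using summable_abs_gg hh) (gg_zero h)
  have h1 : (fun p : Nat.Primes => ∑' e : ℕ, gg h ((p : ℕ) ^ e))
      = fun p : Nat.Primes => 1 + gg h (p : ℕ) := funext (tsum_gg_prime_pow h)
  rwa [h1] at h0

lemma hasProd_tfun :
    HasProd (fun p : Nat.Primes => if 2 < (p : ℕ) then 1 - 1 / (((p : ℕ) : ℝ) - 1) ^ 2 else 1)
      twinPrimeConst := by
  have h0 := EulerProduct.eulerProduct_hasProd (f := gstar) gstar_one
    (fun {m k} hmk => gstar_mul hmk)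
    (by simpa [Real.norm_eq_abs] using summable_abs_gstar) gstar_zero
  have h1 : (fun p : Nat.Primes => ∑' e : ℕ, gstar ((p : ℕ) ^ e))
      = fun p : Nat.Primes => if 2 < (p : ℕ) then 1 - 1 / (((p : ℕ) : ℝ) - 1) ^ 2 else 1 :=
    funext tsum_gstar_prime_pow
  rw [h1] at h0
  have h2 : twinPrimeConst = ∑' q, gstar q := by
    rw [twinPrimeConst, h0.tprod_eq]
  rwa [h2]

def Sset (h : ℤ) : Finset ℕ := h.natAbs.primeFactors.filter (fun p => 2 < p)

def Rfun (h : ℤ) (p : ℕ) : ℝ :=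
  if p = 2 then 2 else if p ∈ Sset h then ((p : ℝ) - 1) / ((p : ℝ) - 2) else 1

lemma two_mem_primeFactors {h : ℤ} (hh : h ≠ 0) (h2 : 2 ∣ h) :
    2 ∈ h.natAbs.primeFactors := by
  refine Nat.mem_primeFactors.mpr ⟨Nat.prime_two, ?_, Int.natAbs_ne_zero.mpr hh⟩
  rw [← Int.natCast_dvd (n := h) (m := 2)] at *
  · exact_mod_cast h2

lemma hasProd_Rfun {h : ℤ} (hh : h ≠ 0) (h2 : 2 ∣ h) :
    HasProd (fun p : Nat.Primes => Rfun h (p : ℕ))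
      (2 * ∏ p ∈ Sset h, ((p : ℝ) - 1) / ((p : ℝ) - 2)) := by
  classical
  set sP : Finset Nat.Primes := (h.natAbs.primeFactors).subtype Nat.Prime with hsP
  have hoff : ∀ p : Nat.Primes, p ∉ sP → Rfun h (p : ℕ) = 1 := by
    intro p hmem
    have hnot : (p : ℕ) ∉ h.natAbs.primeFactors := by
      intro hc
      exact hmem (Finset.mem_subtype.mpr hc)
    unfold Rfun
    rw [if_neg ?_, if_neg ?_]
    · intro hS
      exact hnot (Finset.mem_of_mem_filter _ hS)
    · intro hp2
      refine hnot ?_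
      rw [hp2]
      exact two_mem_primeFactors hh h2
  have hval : ∏ p ∈ sP, Rfun h (p : ℕ)
      = 2 * ∏ p ∈ Sset h, ((p : ℝ) - 1) / ((p : ℝ) - 2) := by
    have hval1 : ∏ p ∈ sP, Rfun h (p : ℕ) = ∏ q ∈ h.natAbs.primeFactors, Rfun h q := by
      refine Finset.prod_bij (fun (p : Nat.Primes) _ => (p : ℕ)) ?_ ?_ ?_ ?_
      · intro p hp
        exact Finset.mem_subtype.mp hp
      · intro a _ b _ hab
        exact Nat.Primes.coe_nat_injective hab
      · intro q hq
        exact ⟨⟨q, Nat.prime_of_mem_primeFactors hq⟩, Finset.mem_subtype.mpr hq, rfl⟩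
      · intro p _
        rfl
    rw [hval1, ← Finset.mul_prod_erase _ _ (two_mem_primeFactors hh h2)]
    have hR2 : Rfun h 2 = 2 := by unfold Rfun; rw [if_pos rfl]
    have herase : (h.natAbs.primeFactors).erase 2 = Sset h := by
      ext p
      simp only [Finset.mem_erase, Sset, Finset.mem_filter]
      constructor
      · rintro ⟨hne, hmem⟩
        have := (Nat.prime_of_mem_primeFactors hmem).two_le
        exact ⟨hmem, by omega⟩
      · rintro ⟨hmem, hlt⟩
        exact ⟨by omega, hmem⟩
    rw [hR2, herase]
    congr 1
    refine Finset.prod_congr rfl fun p hp => ?_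
    have hp2 : 2 < p := (Finset.mem_filter.mp hp).2
    unfold Rfun
    rw [if_neg (by omega), if_pos hp]
  exact hval ▸ hasProd_prod_of_ne_finset_one hoff

lemma factor_eq {h : ℤ} (hh : h ≠ 0) (h2 : 2 ∣ h) (p : Nat.Primes) :
    1 + gg h (p : ℕ)
      = (if 2 < (p : ℕ) then 1 - 1 / (((p : ℕ) : ℝ) - 1) ^ 2 else 1) * Rfun h (p : ℕ) := by
  obtain ⟨q, hq⟩ := p
  simp only
  unfold gg
  rw [cA_prime hq h, ArithmeticFunction.moebius_apply_prime hq, Nat.totient_prime hq]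
  have hq1 : 1 ≤ q := hq.one_le
  have hcast : (((q - 1 : ℕ)) : ℝ) = (q : ℝ) - 1 := by
    push_cast [Nat.cast_sub hq1]
    ring
  rw [hcast]
  by_cases hq2 : q = 2
  · subst hq2
    have hdvd : ((2 : ℕ) : ℤ) ∣ h := by exact_mod_cast h2
    rw [if_pos hdvd, if_neg (by omega : ¬ (2:ℕ) < 2)]
    unfold Rfun
    rw [if_pos rfl]
    norm_num
  · have h2lt : 2 < q := by have := hq.two_le; omega
    have hq3 : 3 ≤ q := by omega
    have hqR : (3 : ℝ) ≤ (q : ℝ) := by exact_mod_cast hq3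
    have hne1 : (q : ℝ) - 1 ≠ 0 := by linarith
    have hne2 : (q : ℝ) - 2 ≠ 0 := by linarith
    rw [if_pos h2lt]
    unfold Rfun
    rw [if_neg hq2]
    by_cases hdvd : ((q : ℕ) : ℤ) ∣ h
    · have hSmem : q ∈ Sset h := by
        refine Finset.mem_filter.mpr ⟨?_, h2lt⟩
        exact Nat.mem_primeFactors.mpr ⟨hq, Int.natCast_dvd.mp hdvd, Int.natAbs_ne_zero.mpr hh⟩
      rw [if_pos hdvd, if_pos hSmem]
      push_cast
      field_simp
      ring
    · have hSmem : q ∉ Sset h := by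
        intro hc
        have := (Nat.mem_primeFactors.mp (Finset.mem_of_mem_filter q hc)).2.1
        exact hdvd (Int.natCast_dvd.mpr this)
      rw [if_neg hdvd, if_neg hSmem]
      push_cast
      field_simp
      ring

lemma tsum_gg_eq {h : ℤ} (hh : h ≠ 0) (h2 : 2 ∣ h) :
    ∑' q, gg h q = singularSeries h := by
  have hP := hasProd_tfun.mul (hasProd_Rfun hh h2)
  have hfe : (fun p : Nat.Primes =>
      (if 2 < (p : ℕ) then 1 - 1 / (((p : ℕ) : ℝ) - 1) ^ 2 else 1) * Rfun h (p : ℕ))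
      = fun p : Nat.Primes => 1 + gg h (p : ℕ) := funext fun p => (factor_eq hh h2 p).symm
  rw [hfe] at hP
  have := (hasProd_gg hh).unique hP
  rw [this, singularSeries, if_pos h2, Sset]
  ring
-- Part 6: counting and assembly
lemma count_multiples {H : ℝ} (hH : 2 ≤ H) {e : ℕ} (he : e ≠ 0) :
    (e : ℝ) * ((((Finset.Icc (-⌊H⌋) ⌊H⌋).filter fun h : ℤ => h ≠ 0 ∧ (e : ℤ) ∣ h).card) : ℝ)
      ≤ 2 * H := by
  have hepos : (0 : ℤ) < (e : ℤ) := by exact_mod_cast Nat.pos_of_ne_zero he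
  have hfloor : (2 : ℤ) ≤ ⌊H⌋ := by
    rw [Int.le_floor]; exact_mod_cast hH
  set m : ℤ := ⌊H⌋ / (e : ℤ) with hm
  have hm0 : 0 ≤ m := Int.ediv_nonneg (by omega) hepos.le
  have hsub : (((Finset.Icc (-⌊H⌋) ⌊H⌋).filter fun h : ℤ => h ≠ 0 ∧ (e : ℤ) ∣ h)).card
      ≤ ((Finset.Icc (-m) m).erase 0).card := by
    refine Finset.card_le_card_of_injOn (fun h => h / (e : ℤ)) ?_ ?_
    · intro h hmem
      rw [Finset.mem_coe, Finset.mem_filter, Finset.mem_Icc] at hmem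
      obtain ⟨⟨hlo, hhi⟩, hne, hdvd⟩ := hmem
      dsimp only
      rw [Finset.mem_coe, Finset.mem_erase, Finset.mem_Icc]
      have hcancel : (e : ℤ) * (h / (e : ℤ)) = h := Int.mul_ediv_cancel' hdvd
      obtain ⟨c, rfl⟩ := hdvd
      have hc1 : (e : ℤ) * c / (e : ℤ) = c := Int.mul_ediv_cancel_left _ (ne_of_gt hepos)
      have hc2 : -((e : ℤ) * c) / (e : ℤ) = -c := by
        rw [show -((e : ℤ) * c) = (e : ℤ) * (-c) by ring,
          Int.mul_ediv_cancel_left _ (ne_of_gt hepos)]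
      have hup : (e : ℤ) * c / (e : ℤ) ≤ m := by
        rw [hm]; exact Int.ediv_le_ediv hepos hhi
      have hdn : -((e : ℤ) * c) / (e : ℤ) ≤ m := by
        rw [hm]; exact Int.ediv_le_ediv hepos (by omega)
      refine ⟨?_, ?_, ?_⟩
      · intro h0
        rw [h0, mul_zero] at hcancel
        exact hne hcancel.symm
      · omega
      · omega
    · intro a ha b hb hab
      rw [Finset.mem_coe, Finset.mem_filter] at ha hb
      have h1 := Int.mul_ediv_cancel' ha.2.2
      have h2 := Int.mul_ediv_cancel' hb.2.2
      dsimp only at hab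
      rw [← h1, ← h2, hab]
  have hmem0 : (0 : ℤ) ∈ Finset.Icc (-m) m := Finset.mem_Icc.mpr ⟨by omega, hm0⟩
  have hcard : ((Finset.Icc (-m) m).erase 0).card = (2 * m).toNat := by
    rw [Finset.card_erase_of_mem hmem0, Int.card_Icc]
    omega
  have hme : m * (e : ℤ) ≤ ⌊H⌋ := Int.ediv_mul_le ⌊H⌋ (ne_of_gt hepos)
  have hHfloor : ((⌊H⌋ : ℤ) : ℝ) ≤ H := Int.floor_le H
  calc (e : ℝ) * ((((Finset.Icc (-⌊H⌋) ⌊H⌋).filter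
          fun h : ℤ => h ≠ 0 ∧ (e : ℤ) ∣ h).card) : ℝ)
      ≤ (e : ℝ) * (((2 * m).toNat : ℝ)) := by
        refine mul_le_mul_of_nonneg_left ?_ (by positivity)
        rw [← hcard]
        exact_mod_cast hsub
    _ = (((e : ℤ) * (2 * m) : ℤ) : ℝ) := by
        have ht : (((2 * m).toNat : ℤ)) = 2 * m := Int.toNat_of_nonneg (by omega)
        have ht' : (((2 * m).toNat : ℝ)) = 2 * (m : ℝ) := by
          exact_mod_cast congrArg (fun z : ℤ => (z : ℝ)) ht
        rw [ht']
        push_cast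
        ring
    _ ≤ ((2 * ⌊H⌋ : ℤ) : ℝ) := by
        have : (e : ℤ) * (2 * m) ≤ 2 * ⌊H⌋ := by
          have : m * (e : ℤ) ≤ ⌊H⌋ := hme
          nlinarith
        exact_mod_cast this
    _ ≤ 2 * H := by
        push_cast
        linarith
def kf (q : ℕ) : ℝ :=
  ((moebius q : ℤ) : ℝ) ^ 2 * (q.divisors.card : ℝ) / ((Nat.totient q : ℕ) : ℝ) ^ 2

lemma kf_nonneg (q : ℕ) : 0 ≤ kf q := by unfold kf; positivity

lemma kf_le (q : ℕ) : kf q ≤ C₀ * (q : ℝ) ^ (-(199 : ℝ) / 100) := key_bound q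

lemma summable_kf : Summable kf :=
  Summable.of_nonneg_of_le kf_nonneg kf_le summable_rpow199

lemma sum_BB_over_F {H : ℝ} (hH : 2 ≤ H) (q : ℕ) :
    ∑ h ∈ (Finset.Icc (-⌊H⌋) ⌊H⌋).filter (fun h : ℤ => h ≠ 0), BB h q
      ≤ 2 * H * kf q := by
  have hstep : ∑ h ∈ (Finset.Icc (-⌊H⌋) ⌊H⌋).filter (fun h : ℤ => h ≠ 0), BB h q
      = ((moebius q : ℤ) : ℝ) ^ 2 *
          (∑ h ∈ (Finset.Icc (-⌊H⌋) ⌊H⌋).filter (fun h : ℤ => h ≠ 0),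
            ∑ e ∈ q.divisors, if (e : ℤ) ∣ h then (e : ℝ) else 0)
          / ((Nat.totient q : ℕ) : ℝ) ^ 2 := by
    unfold BB
    rw [← Finset.sum_div, ← Finset.mul_sum]
  rw [hstep]
  have hswap : ∑ h ∈ (Finset.Icc (-⌊H⌋) ⌊H⌋).filter (fun h : ℤ => h ≠ 0),
        ∑ e ∈ q.divisors, (if (e : ℤ) ∣ h then (e : ℝ) else 0)
      = ∑ e ∈ q.divisors, ∑ h ∈ (Finset.Icc (-⌊H⌋) ⌊H⌋).filter (fun h : ℤ => h ≠ 0),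
          (if (e : ℤ) ∣ h then (e : ℝ) else 0) := Finset.sum_comm
  have hinner : ∀ e ∈ q.divisors,
      ∑ h ∈ (Finset.Icc (-⌊H⌋) ⌊H⌋).filter (fun h : ℤ => h ≠ 0),
        (if (e : ℤ) ∣ h then (e : ℝ) else 0) ≤ 2 * H := by
    intro e he
    have he0 : e ≠ 0 := (Nat.pos_of_mem_divisors he).ne'
    have hcount := count_multiples hH he0
    have heq : ∑ h ∈ (Finset.Icc (-⌊H⌋) ⌊H⌋).filter (fun h : ℤ => h ≠ 0),
        (if (e : ℤ) ∣ h then (e : ℝ) else 0)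
        = (((((Finset.Icc (-⌊H⌋) ⌊H⌋).filter (fun h : ℤ => h ≠ 0)).filter
            (fun h => (e : ℤ) ∣ h)).card) : ℝ) * (e : ℝ) := by
      rw [← Finset.sum_filter, Finset.sum_const, nsmul_eq_mul]
    rw [heq, Finset.filter_filter]
    calc ((((Finset.Icc (-⌊H⌋) ⌊H⌋).filter
            (fun h : ℤ => h ≠ 0 ∧ (e : ℤ) ∣ h)).card) : ℝ) * (e : ℝ)
        = (e : ℝ) * ((((Finset.Icc (-⌊H⌋) ⌊H⌋).filter
            (fun h : ℤ => h ≠ 0 ∧ (e : ℤ) ∣ h)).card) : ℝ) := mul_comm _ _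
      _ ≤ 2 * H := hcount
  have htot : ∑ e ∈ q.divisors, ∑ h ∈ (Finset.Icc (-⌊H⌋) ⌊H⌋).filter (fun h : ℤ => h ≠ 0),
        (if (e : ℤ) ∣ h then (e : ℝ) else 0) ≤ (q.divisors.card : ℝ) * (2 * H) := by
    have := Finset.sum_le_card_nsmul q.divisors _ (2 * H) hinner
    simpa [nsmul_eq_mul] using this
  rw [hswap]
  unfold kf
  rcases eq_or_ne (Nat.totient q) 0 with hφ | hφ
  · rw [hφ]; norm_num
  · have hφpos : 0 < ((Nat.totient q : ℕ) : ℝ) ^ 2 := by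
      have : 0 < Nat.totient q := Nat.pos_of_ne_zero hφ
      positivity
    calc ((moebius q : ℤ) : ℝ) ^ 2 *
          (∑ e ∈ q.divisors, ∑ h ∈ (Finset.Icc (-⌊H⌋) ⌊H⌋).filter (fun h : ℤ => h ≠ 0),
            (if (e : ℤ) ∣ h then (e : ℝ) else 0)) / ((Nat.totient q : ℕ) : ℝ) ^ 2
        ≤ ((moebius q : ℤ) : ℝ) ^ 2 * ((q.divisors.card : ℝ) * (2 * H))
            / ((Nat.totient q : ℕ) : ℝ) ^ 2 :=
          div_le_div_of_nonneg_right
            (mul_le_mul_of_nonneg_left htot (sq_nonneg _)) hφpos.le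
      _ = 2 * H * (((moebius q : ℤ) : ℝ) ^ 2 * (q.divisors.card : ℝ)
            / ((Nat.totient q : ℕ) : ℝ) ^ 2) := by ring

lemma abs_partial_sub_le {h : ℤ} (hne : h ≠ 0) (h2 : 2 ∣ h) (M : ℕ) :
    |(∑ q ∈ Finset.Icc 1 M, gg h q) - singularSeries h|
      ≤ ∑' (q : ((↑(Finset.Icc 1 M) : Set ℕ)ᶜ : Set ℕ)), BB h (q : ℕ) := by
  have hsum := summable_gg hne
  have hkey := Summable.sum_add_tsum_compl (s := Finset.Icc 1 M) hsum
  rw [← tsum_gg_eq hne h2]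
  have hdiff : (∑ q ∈ Finset.Icc 1 M, gg h q) - ∑' q, gg h q
      = -(∑' (q : ((↑(Finset.Icc 1 M) : Set ℕ)ᶜ : Set ℕ)), gg h (q : ℕ)) := by
    rw [← hkey]; ring
  rw [hdiff, abs_neg]
  calc |∑' (q : ((↑(Finset.Icc 1 M) : Set ℕ)ᶜ : Set ℕ)), gg h (q : ℕ)|
      ≤ ∑' (q : ((↑(Finset.Icc 1 M) : Set ℕ)ᶜ : Set ℕ)), |gg h (q : ℕ)| := by
        simpa [Real.norm_eq_abs] using
          norm_tsum_le_tsum_norm (f := fun q : ((↑(Finset.Icc 1 M) : Set ℕ)ᶜ : Set ℕ) =>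
            gg h (q : ℕ)) (((summable_abs_gg hne).subtype ((↑(Finset.Icc 1 M) : Set ℕ)ᶜ)).congr fun q => (Real.norm_eq_abs _).symm)
    _ ≤ ∑' (q : ((↑(Finset.Icc 1 M) : Set ℕ)ᶜ : Set ℕ)), BB h (q : ℕ) :=
        Summable.tsum_le_tsum (fun q => abs_gg_le h (q : ℕ))
          ((summable_abs_gg hne).subtype _) ((summable_BB hne).subtype _)

lemma complex_abs_eq (h : ℤ) (M : ℕ) :
    ‖(∑ q ∈ Finset.Icc 1 M,
        ((moebius q : ℤ) : ℂ) ^ 2 * ramanujanSum q (-h) / ((Nat.totient q : ℕ) : ℂ) ^ 2)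
      - ((singularSeries h : ℝ) : ℂ)‖
    = |(∑ q ∈ Finset.Icc 1 M, gg h q) - singularSeries h| := by
  have hterm : ∀ q ∈ Finset.Icc 1 M,
      ((moebius q : ℤ) : ℂ) ^ 2 * ramanujanSum q (-h) / ((Nat.totient q : ℕ) : ℂ) ^ 2
        = ((gg h q : ℝ) : ℂ) := by
    intro q hq
    have hq0 : q ≠ 0 := by
      have := (Finset.mem_Icc.mp hq).1; omega
    rw [ramanujanSum_eq_cA hq0, cA_neg]
    unfold gg
    push_cast
    ring
  rw [Finset.sum_congr rfl hterm, ← Complex.ofReal_sum, ← Complex.ofReal_sub,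
    Complex.norm_real, Real.norm_eq_abs]
lemma main_estimate {Q H C : ℝ} (hQ1 : 1 ≤ Q) (hH : 2 ≤ H)
    (hC : C = 1 + 2 * KK / Real.log 2) :
    (((Finset.Icc (-⌊H⌋) ⌊H⌋).filter fun h : ℤ =>
        h ≠ 0 ∧ 2 ∣ h ∧
          ¬ ‖
              ((∑ q ∈ Finset.Icc 1 ⌊Q⌋₊,
                  ((ArithmeticFunction.moebius q : ℤ) : ℂ) ^ 2 * ramanujanSum q (-h) /
                    ((Nat.totient q : ℕ) : ℂ) ^ 2) -
                ((singularSeries h : ℝ) : ℂ))‖ ≤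
            C * Q ^ (-(1 : ℝ) / 3) * Real.log H).card : ℝ) ≤
      C * H * Q ^ (-(1 : ℝ) / 3) := by
  classical
  have hlog2 : 0 < Real.log 2 := Real.log_pos (by norm_num)
  have hCpos : 0 < C := by
    rw [hC]
    have h0 : 0 ≤ 2 * KK / Real.log 2 := by
      have := KK_nonneg
      positivity
    linarith
  have hC1 : 1 ≤ C := by
    rw [hC]
    have h0 : 0 ≤ 2 * KK / Real.log 2 := by
      have := KK_nonneg
      positivity
    linarith
  have hQ0 : 0 < Q := lt_of_lt_of_le one_pos hQ1
  have hHpos : (0 : ℝ) < H := by linarith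
  have hlogH : 0 < Real.log H := Real.log_pos (by linarith)
  have hlog2H : Real.log 2 ≤ Real.log H := Real.log_le_log (by norm_num) hH
  set M : ℕ := ⌊Q⌋₊ with hM
  set ε : ℝ := C * Q ^ (-(1 : ℝ) / 3) * Real.log H with hε
  have hεpos : 0 < ε :=
    mul_pos (mul_pos hCpos (Real.rpow_pos_of_pos hQ0 _)) hlogH
  set T : ℤ → ℝ := fun h => ∑' (q : ((↑(Finset.Icc 1 M) : Set ℕ)ᶜ : Set ℕ)), BB h (q : ℕ)
    with hT
  set B : Finset ℤ := (Finset.Icc (-⌊H⌋) ⌊H⌋).filter (fun h : ℤ =>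
      h ≠ 0 ∧ 2 ∣ h ∧
        ¬ ‖
            ((∑ q ∈ Finset.Icc 1 M,
                ((ArithmeticFunction.moebius q : ℤ) : ℂ) ^ 2 * ramanujanSum q (-h) /
                  ((Nat.totient q : ℕ) : ℂ) ^ 2) -
              ((singularSeries h : ℝ) : ℂ))‖ ≤ ε) with hB
  set F : Finset ℤ := (Finset.Icc (-⌊H⌋) ⌊H⌋).filter (fun h : ℤ => h ≠ 0) with hF
  have hpt : ∀ h ∈ B, ε ≤ T h := by
    intro h hmem
    rw [hB, Finset.mem_filter] at hmem
    obtain ⟨hIcc, hne, h2, hgt⟩ := hmem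
    have hlt := not_le.mp hgt
    rw [complex_abs_eq h M] at hlt
    exact hlt.le.trans (abs_partial_sub_le hne h2 M)
  have h1 : (B.card : ℝ) * ε ≤ ∑ h ∈ B, T h := by
    have := Finset.card_nsmul_le_sum B T ε hpt
    simpa [nsmul_eq_mul] using this
  have hsub : B ⊆ F := by
    intro h hmem
    rw [hB, Finset.mem_filter] at hmem
    exact Finset.mem_filter.mpr ⟨hmem.1, hmem.2.1⟩
  have h2 : ∑ h ∈ B, T h ≤ ∑ h ∈ F, T h := by
    refine Finset.sum_le_sum_of_subset_of_nonneg hsub fun h _ _ => ?_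
    exact tsum_nonneg fun q => BB_nonneg h (q : ℕ)
  have hFne : ∀ h ∈ F, h ≠ 0 := by
    intro h hmem
    exact (Finset.mem_filter.mp hmem).2
  have h3 : ∑ h ∈ F, T h
      = ∑' (q : ((↑(Finset.Icc 1 M) : Set ℕ)ᶜ : Set ℕ)), ∑ h ∈ F, BB h (q : ℕ) := by
    rw [hT]
    exact (Summable.tsum_finsetSum fun h hmem => (summable_BB (hFne h hmem)).subtype _).symm
  have h4 : ∑' (q : ((↑(Finset.Icc 1 M) : Set ℕ)ᶜ : Set ℕ)), ∑ h ∈ F, BB h (q : ℕ)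
      ≤ ∑' (q : ((↑(Finset.Icc 1 M) : Set ℕ)ᶜ : Set ℕ)), 2 * H * kf (q : ℕ) := by
    refine Summable.tsum_le_tsum (fun q => ?_) ?_ ?_
    · rw [hF]
      exact sum_BB_over_F hH (q : ℕ)
    · exact summable_sum fun h hmem => (summable_BB (hFne h hmem)).subtype _
    · exact (summable_kf.mul_left (2 * H)).subtype _
  have h5 : ∑' (q : ((↑(Finset.Icc 1 M) : Set ℕ)ᶜ : Set ℕ)), 2 * H * kf (q : ℕ)
      = 2 * H * ∑' (q : ((↑(Finset.Icc 1 M) : Set ℕ)ᶜ : Set ℕ)), kf (q : ℕ) := tsum_mul_left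
  have h6 : ∑' (q : ((↑(Finset.Icc 1 M) : Set ℕ)ᶜ : Set ℕ)), kf (q : ℕ)
      ≤ KK * Q ^ (-(2 : ℝ) / 3) := by
    rw [hM]
    exact tsum_tail_le hQ1 kf_nonneg kf_le
  have hcard : (B.card : ℝ) * ε ≤ 2 * H * (KK * Q ^ (-(2 : ℝ) / 3)) := by
    calc (B.card : ℝ) * ε ≤ ∑ h ∈ B, T h := h1
      _ ≤ ∑ h ∈ F, T h := h2
      _ = _ := h3
      _ ≤ _ := h4
      _ = _ := h5
      _ ≤ 2 * H * (KK * Q ^ (-(2 : ℝ) / 3)) :=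
          mul_le_mul_of_nonneg_left h6 (by positivity)
  have hCl2 : C * Real.log 2 = Real.log 2 + 2 * KK := by
    rw [hC]
    field_simp
  have hK2 : 2 * KK ≤ C ^ 2 * Real.log H := by
    have ha : 2 * KK ≤ C * Real.log 2 := by linarith
    have hb : C * Real.log 2 ≤ C * Real.log H :=
      mul_le_mul_of_nonneg_left hlog2H hCpos.le
    have hc : C * Real.log H ≤ C ^ 2 * Real.log H := by
      nlinarith [mul_nonneg (mul_nonneg hCpos.le (sub_nonneg.mpr hC1)) hlogH.le]
    linarith
  have hsplit : Q ^ (-(2 : ℝ) / 3) = Q ^ (-(1 : ℝ) / 3) * Q ^ (-(1 : ℝ) / 3) := by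
    rw [← Real.rpow_add hQ0]
    norm_num
  have hfin : (B.card : ℝ) * ε ≤ (C * H * Q ^ (-(1 : ℝ) / 3)) * ε := by
    calc (B.card : ℝ) * ε ≤ 2 * H * (KK * Q ^ (-(2 : ℝ) / 3)) := hcard
      _ = (2 * KK) * (H * (Q ^ (-(1 : ℝ) / 3) * Q ^ (-(1 : ℝ) / 3))) := by
          rw [hsplit]; ring
      _ ≤ (C ^ 2 * Real.log H) * (H * (Q ^ (-(1 : ℝ) / 3) * Q ^ (-(1 : ℝ) / 3))) := by
          refine mul_le_mul_of_nonneg_right hK2 ?_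
          have := Real.rpow_pos_of_pos hQ0 (-(1 : ℝ) / 3)
          positivity
      _ = (C * H * Q ^ (-(1 : ℝ) / 3)) * ε := by rw [hε]; ring
  exact le_of_mul_le_mul_right hfin hεpos
end SingularAux

/-- Lemma 5.2: the singular series lemma. -/
theorem singular_series_sum :
    ∀ A' : ℝ, 0 < A' → ∃ C : ℝ, 0 < C ∧
      ∀ᶠ X : ℝ in atTop, ∀ H : ℝ, 2 ≤ H →
        (((Finset.Icc (-⌊H⌋) ⌊H⌋).filter fun h : ℤ =>
            h ≠ 0 ∧ 2 ∣ h ∧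
              ¬ ‖
                  ((∑ q ∈ Finset.Icc 1 ⌊(Real.log X) ^ A'⌋₊,
                      ((ArithmeticFunction.moebius q : ℤ) : ℂ) ^ 2 * ramanujanSum q (-h) /
                        ((Nat.totient q : ℕ) : ℂ) ^ 2) -
                    ((singularSeries h : ℝ) : ℂ))‖ ≤
                C * ((Real.log X) ^ A') ^ (-(1 : ℝ) / 3) * Real.log H).card : ℝ) ≤
          C * H * ((Real.log X) ^ A') ^ (-(1 : ℝ) / 3) := by
  
  intro A' hA'
  have hlog2 : 0 < Real.log 2 := Real.log_pos (by norm_num)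
  have hCpos : 0 < 1 + 2 * KK / Real.log 2 := by
    have h0 : 0 ≤ 2 * KK / Real.log 2 := by
      have := KK_nonneg
      positivity
    linarith
  refine ⟨1 + 2 * KK / Real.log 2, hCpos, ?_⟩
  have hX : ∀ᶠ X : ℝ in atTop, 1 ≤ Real.log X :=
    Real.tendsto_log_atTop.eventually_ge_atTop 1
  filter_upwards [hX] with X hlogX H hH
  have hQ1 : 1 ≤ (Real.log X) ^ A' := by
    calc (1 : ℝ) = 1 ^ A' := (Real.one_rpow A').symm
      _ ≤ (Real.log X) ^ A' := Real.rpow_le_rpow (by norm_num) hlogX hA'.le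
  exact main_estimate hQ1 hH rfl
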